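/- Let 0 < α < 1. The function φ_α(s) := s^{1−α}·√(1 − s^{2α}) + (1 − α)·(1 − s^{2α})·∫_s^1 u^{−α}(1 − u^{2α})^{−1/2} du is strictly decreasing on (0, 1). -/

import Mathlib

open Real MeasureTheory intervalIntegral Set

section FermiAux

variable {α : ℝ}

private lemma fermi_bernoulli (hα0 : 0 < α) (hα1 : α < 1) {u : ℝ} (hu0 : 0 < u) (hu1 : u ≤ 1) :
    α * (1 - u) ≤ 1 - u ^ (2 * α) := by
  have h1 : u ^ α * 1 ^ (1 - α) ≤ α * u + (1 - α) * 1 :=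
    Real.geom_mean_le_arith_mean2_weighted hα0.le (by linarith) hu0.le zero_le_one (by ring)
  rw [Real.one_rpow, mul_one] at h1
  have h2 : u ^ (2 * α) ≤ u ^ α :=
    Real.rpow_le_rpow_of_exponent_ge hu0 hu1 (by linarith)
  linarith

private lemma fermi_cont (hα0 : 0 < α) {x : ℝ} (hx : x ∈ Set.Ioo (0:ℝ) 1) :
    ContinuousAt (fun u : ℝ => u ^ (-α) * (1 - u ^ (2 * α)) ^ (-(1 : ℝ) / 2)) x := by
  obtain ⟨hx0, hx1⟩ := hx
  have hq : x ^ (2 * α) < 1 := Real.rpow_lt_one hx0.le hx1 (by linarith)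
  have h1 : ContinuousAt (fun u : ℝ => u ^ (-α)) x :=
    Real.continuousAt_rpow_const x (-α) (Or.inl hx0.ne')
  have h2 : ContinuousAt (fun u : ℝ => (1 - u ^ (2 * α)) ^ (-(1 : ℝ) / 2)) x := by
    have hinner : ContinuousAt (fun u : ℝ => 1 - u ^ (2 * α)) x :=
      continuousAt_const.sub (Real.continuousAt_rpow_const x (2 * α) (Or.inl hx0.ne'))
    exact (Real.continuousAt_rpow_const _ _ (Or.inl (by linarith))).comp hinner
  exact h1.mul h2

private lemma fermi_integrable (hα0 : 0 < α) (hα1 : α < 1) {s : ℝ} (hs0 : 0 < s) (hs1 : s < 1) :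
    IntervalIntegrable (fun u : ℝ => u ^ (-α) * (1 - u ^ (2 * α)) ^ (-(1 : ℝ) / 2))
      volume s 1 := by
  have hbase : IntervalIntegrable (fun x : ℝ => x ^ (-(1 : ℝ) / 2)) volume (1 - s) (1 - 1) :=
    intervalIntegrable_rpow' (by norm_num)
  have hg0 : IntervalIntegrable (fun u : ℝ => (1 - u) ^ (-(1 : ℝ) / 2)) volume s 1 := by
    have := hbase.comp_sub_left 1
    simpa using this
  have hg : IntervalIntegrable
      (fun u : ℝ => s ^ (-α) * α ^ (-(1 : ℝ) / 2) * (1 - u) ^ (-(1 : ℝ) / 2)) volume s 1 :=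
    hg0.const_mul _
  refine hg.mono_fun ?_ ?_
  · rw [Set.uIoc_of_le hs1.le, ← MeasureTheory.restrict_Ioo_eq_restrict_Ioc]
    refine ContinuousOn.aestronglyMeasurable ?_ measurableSet_Ioo
    intro x hx
    exact (fermi_cont hα0 ⟨hs0.trans hx.1, hx.2⟩).continuousWithinAt
  · rw [Set.uIoc_of_le hs1.le, ← MeasureTheory.restrict_Ioo_eq_restrict_Ioc]
    filter_upwards [ae_restrict_mem measurableSet_Ioo] with u hu
    obtain ⟨hus, hu1'⟩ := hu
    have hu1 : u ≤ 1 := hu1'.le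
    have hu0 : 0 < u := hs0.trans hus
    have hq1 : u ^ (2 * α) ≤ 1 := Real.rpow_le_one hu0.le hu1 (by linarith)
    have hA : (0:ℝ) ≤ u ^ (-α) := Real.rpow_nonneg hu0.le _
    have hB : (0:ℝ) ≤ (1 - u ^ (2 * α)) ^ (-(1 : ℝ) / 2) :=
      Real.rpow_nonneg (by linarith) _
    have hAle : u ^ (-α) ≤ s ^ (-α) :=
      Real.rpow_le_rpow_of_nonpos hs0 hus.le (by linarith)
    have hBle : (1 - u ^ (2 * α)) ^ (-(1 : ℝ) / 2) ≤
        (α * (1 - u)) ^ (-(1 : ℝ) / 2) := by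
      have hpos : 0 < α * (1 - u) := by
        have : 0 < 1 - u := by linarith
        positivity
      exact Real.rpow_le_rpow_of_nonpos hpos
        (fermi_bernoulli hα0 hα1 hu0 hu1) (by norm_num)
    have hsplit : (α * (1 - u)) ^ (-(1 : ℝ) / 2) =
        α ^ (-(1 : ℝ) / 2) * (1 - u) ^ (-(1 : ℝ) / 2) :=
      Real.mul_rpow hα0.le (by linarith)
    have hRHSnn : (0:ℝ) ≤ s ^ (-α) * α ^ (-(1 : ℝ) / 2) * (1 - u) ^ (-(1 : ℝ) / 2) := by
      have h1 : (0:ℝ) ≤ s ^ (-α) := Real.rpow_nonneg hs0.le _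
      have h2 : (0:ℝ) ≤ α ^ (-(1 : ℝ) / 2) := Real.rpow_nonneg hα0.le _
      have h3 : (0:ℝ) ≤ (1 - u) ^ (-(1 : ℝ) / 2) := Real.rpow_nonneg (by linarith) _
      positivity
    calc ‖u ^ (-α) * (1 - u ^ (2 * α)) ^ (-(1 : ℝ) / 2)‖
        = u ^ (-α) * (1 - u ^ (2 * α)) ^ (-(1 : ℝ) / 2) := by
          rw [Real.norm_eq_abs, abs_of_nonneg (mul_nonneg hA hB)]
      _ ≤ s ^ (-α) * ((α * (1 - u)) ^ (-(1 : ℝ) / 2)) := by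
          apply mul_le_mul hAle hBle hB (Real.rpow_nonneg hs0.le _)
      _ = s ^ (-α) * α ^ (-(1 : ℝ) / 2) * (1 - u) ^ (-(1 : ℝ) / 2) := by
          rw [hsplit]; ring
      _ ≤ ‖s ^ (-α) * α ^ (-(1 : ℝ) / 2) * (1 - u) ^ (-(1 : ℝ) / 2)‖ :=
          le_abs_self _

private lemma fermi_hasDerivAt (hα0 : 0 < α) (hα1 : α < 1) {s : ℝ}
    (hs : s ∈ Set.Ioo (0:ℝ) 1) :
    HasDerivAt (fun s : ℝ =>
        s ^ (1 - α) * Real.sqrt (1 - s ^ (2 * α)) +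
          (1 - α) * (1 - s ^ (2 * α)) *
            ∫ u in s..(1 : ℝ), u ^ (-α) * (1 - u ^ (2 * α)) ^ (-(1 : ℝ) / 2))
      (-(α * s ^ α / Real.sqrt (1 - s ^ (2 * α))) -
        2 * α * (1 - α) * s ^ (2 * α - 1) *
          ∫ u in s..(1 : ℝ), u ^ (-α) * (1 - u ^ (2 * α)) ^ (-(1 : ℝ) / 2)) s := by
  obtain ⟨hs0, hs1⟩ := hs
  have hq : s ^ (2 * α) < 1 := Real.rpow_lt_one hs0.le hs1 (by linarith)
  have hqpos : 0 < 1 - s ^ (2 * α) := by linarith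
  have hS : 0 < Real.sqrt (1 - s ^ (2 * α)) := Real.sqrt_pos.mpr hqpos
  have h1 : HasDerivAt (fun s : ℝ => s ^ (1 - α)) ((1 - α) * s ^ (1 - α - 1)) s :=
    Real.hasDerivAt_rpow_const (Or.inl hs0.ne')
  have hinner : HasDerivAt (fun s : ℝ => 1 - s ^ (2 * α)) (0 - 2 * α * s ^ (2 * α - 1)) s := by
    have := Real.hasDerivAt_rpow_const (x := s) (p := 2 * α) (Or.inl hs0.ne')
    simpa [mul_assoc] using this.const_sub (1:ℝ)
  have h2 : HasDerivAt (fun s : ℝ => Real.sqrt (1 - s ^ (2 * α)))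
      ((0 - 2 * α * s ^ (2 * α - 1)) / (2 * Real.sqrt (1 - s ^ (2 * α)))) s :=
    hinner.sqrt hqpos.ne'
  have hc : HasDerivAt (fun s : ℝ => (1 - α) * (1 - s ^ (2 * α)))
      ((1 - α) * (0 - 2 * α * s ^ (2 * α - 1))) s := hinner.const_mul _
  have hI : HasDerivAt
      (fun s : ℝ => ∫ u in s..(1 : ℝ), u ^ (-α) * (1 - u ^ (2 * α)) ^ (-(1 : ℝ) / 2))
      (-(s ^ (-α) * (1 - s ^ (2 * α)) ^ (-(1 : ℝ) / 2))) s := by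
    exact integral_hasDerivAt_left (fermi_integrable hα0 hα1 hs0 hs1)
      (ContinuousAt.stronglyMeasurableAtFilter isOpen_Ioo
        (fun x hx => fermi_cont hα0 hx) s ⟨hs0, hs1⟩)
      (fermi_cont hα0 ⟨hs0, hs1⟩)
  have hsum := ((h1.mul h2).add (hc.mul hI))
  refine hsum.congr_deriv (Eq.symm ?_)
  -- algebra
  have e1 : s ^ (1 - α - 1) = s ^ (-α) := by norm_num
  have e2 : s ^ (1 - α) * s ^ (2 * α - 1) = s ^ α := by
    rw [← Real.rpow_add hs0]; ring_nf
  have e3 : (1 - s ^ (2 * α)) ^ (-(1 : ℝ) / 2) = (Real.sqrt (1 - s ^ (2 * α)))⁻¹ := by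
    rw [show (-(1:ℝ)/2) = -(1/2) by norm_num, Real.rpow_neg hqpos.le, ← Real.sqrt_eq_rpow]
  have e4 : Real.sqrt (1 - s ^ (2 * α)) * Real.sqrt (1 - s ^ (2 * α)) = 1 - s ^ (2 * α) :=
    Real.mul_self_sqrt hqpos.le
  rw [e3]
  set S := Real.sqrt (1 - s ^ (2 * α)) with hSdef
  set I := ∫ u in s..(1 : ℝ), u ^ (-α) * (1 - u ^ (2 * α)) ^ (-(1 : ℝ) / 2)
  field_simp
  rw [mul_comm (2:ℝ) α] at e2 e4
  linear_combination (2 * α) * e2 + (-(2 * (1 - α) * s ^ (-α))) * e4 + (-(2 * (1 - α) * S ^ 2)) * e1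

end FermiAux

/-- For `0 < α < 1`, the Fermi relative speed
`φ_α(s) = s^{1-α} √(1 - s^{2α}) + (1-α)(1 - s^{2α}) ∫_s^1 u^{-α} (1 - u^{2α})^{-1/2} du`
is strictly decreasing on `(0, 1)` (Fermi speeds increase with proper distance). -/
theorem fermi_speed_strictAnti (α : ℝ) (hα0 : 0 < α) (hα1 : α < 1) :
    StrictAntiOn (fun s : ℝ =>
        s ^ (1 - α) * Real.sqrt (1 - s ^ (2 * α)) +
          (1 - α) * (1 - s ^ (2 * α)) *
            ∫ u in s..(1 : ℝ), u ^ (-α) * (1 - u ^ (2 * α)) ^ (-(1 : ℝ) / 2))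
      (Set.Ioo 0 1) := by
  apply strictAntiOn_of_deriv_neg (convex_Ioo 0 1)
  · exact fun x hx => (fermi_hasDerivAt hα0 hα1 hx).continuousAt.continuousWithinAt
  · intro x hx
    rw [interior_Ioo] at hx
    obtain ⟨hx0, hx1⟩ := hx
    rw [(fermi_hasDerivAt hα0 hα1 ⟨hx0, hx1⟩).deriv]
    have hq : x ^ (2 * α) < 1 := Real.rpow_lt_one hx0.le hx1 (by linarith)
    have hS : 0 < Real.sqrt (1 - x ^ (2 * α)) := Real.sqrt_pos.mpr (by linarith)
    have hxα : 0 < x ^ α := Real.rpow_pos_of_pos hx0 _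
    have hI : 0 ≤ ∫ u in x..(1:ℝ), u ^ (-α) * (1 - u ^ (2 * α)) ^ (-(1 : ℝ) / 2) := by
      apply intervalIntegral.integral_nonneg hx1.le
      intro u hu
      have hu0 : 0 < u := lt_of_lt_of_le hx0 hu.1
      have : u ^ (2 * α) ≤ 1 := Real.rpow_le_one hu0.le hu.2 (by linarith)
      exact mul_nonneg (Real.rpow_nonneg hu0.le _) (Real.rpow_nonneg (by linarith) _)
    have h1 : 0 < α * x ^ α / Real.sqrt (1 - x ^ (2 * α)) := by positivity
    have h2 : 0 ≤ 2 * α * (1 - α) * x ^ (2 * α - 1) *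
        ∫ u in x..(1:ℝ), u ^ (-α) * (1 - u ^ (2 * α)) ^ (-(1 : ℝ) / 2) := by
      have : (0:ℝ) ≤ x ^ (2 * α - 1) := (Real.rpow_pos_of_pos hx0 _).le
      have h3 : (0:ℝ) ≤ 2 * α * (1 - α) := by nlinarith
      positivity
    linarith
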